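/- Consider the Big-Match game of type II with player 1's (non-quitting) actions {T,B}, player 2's actions {L*,R} where L* is quitting and R is non-quitting, and scalar payoffs g(T,L*) = 1, g(T,R) = 0, g(B,L*) = 0, g(B,R) = −1. There exists λ* ∈ (0,1) such that for every λ ∈ (0,λ*) and every strategy σ of player 1, there is a strategy τ of player 2 with ḡ^λ_∞(σ,τ) ∉ [−1/(2e), 1/(2e)]. Consequently, the set {0} is not weakly approachable by player 1 for the discounted evaluations. -/

import Mathlib

noncomputable section

namespace BigMatchIIExample

/-- Payoffs of the Big-Match game of type II: `true` = `T`, `false` = `B` for player 1;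
`true` = `L*` (quitting), `false` = `R` (non-quitting) for player 2.
`g T L* = 1, g T R = 0, g B L* = 0, g B R = −1`. -/
def g : Bool → Bool → ℝ := fun i j =>
  if i then (if j then 1 else 0) else (if j then 0 else -1)

/-- Expected payoff of the stage `n` steps ahead of the current one, given the unabsorbed
history `h` of player 1's realized past actions (player 2 having played `R` so far);
`σ h` is the probability of `T` and `τ h` the probability of the quitting action `L*`.
From the first stage at which `L*` is played, the action pair is frozen forever. -/
def stageVal (σ τ : List Bool → ℝ) : ℕ → List Bool → ℝ
  | 0, h => ∑ i : Bool, ∑ j : Bool,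
      (if i then σ h else 1 - σ h) * (if j then τ h else 1 - τ h) * g i j
  | n + 1, h => ∑ i : Bool, ∑ j : Bool,
      (if i then σ h else 1 - σ h) * (if j then τ h else 1 - τ h) *
        (if j then g i j else stageVal σ τ n (h ++ [i]))

/-- Expected `λ`-discounted payoff `ḡ^λ_∞(σ,τ) = Σ_{t=1}^∞ λ(1−λ)^{t−1} E_{σ,τ}[g(i_t,j_t)]`. -/
def disc (lam : ℝ) (σ τ : List Bool → ℝ) : ℝ :=
  ∑' t : ℕ, lam * (1 - lam) ^ t * stageVal σ τ t []

/-- A behavioral strategy assigns a probability (of `T`, resp. of `L*`) to each history. -/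
def ValidStrat (σ : List Bool → ℝ) : Prop := ∀ h, σ h ∈ Set.Icc (0 : ℝ) 1

/-- Expected probability of `T` at the stage `n` steps ahead of history `h`, under `σ`. -/
def X (σ : List Bool → ℝ) : ℕ → List Bool → ℝ
  | 0, h => σ h
  | n + 1, h => σ h * X σ n (h ++ [true]) + (1 - σ h) * X σ n (h ++ [false])

lemma X_mem {σ : List Bool → ℝ} (hσ : ValidStrat σ) :
    ∀ n h, X σ n h ∈ Set.Icc (0:ℝ) 1 := by
  intro n
  induction n with
  | zero => intro h; exact hσ h
  | succ n ih =>
    intro h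
    obtain ⟨h0, h1⟩ := hσ h
    obtain ⟨a0, a1⟩ := ih (h ++ [true])
    obtain ⟨b0, b1⟩ := ih (h ++ [false])
    constructor <;> simp only [X] <;> nlinarith

lemma stageVal_tau0 {σ : List Bool → ℝ} :
    ∀ n h, stageVal σ (fun _ => 0) n h = X σ n h - 1 := by
  intro n
  induction n with
  | zero => intro h; simp [stageVal, X, g, Fintype.sum_bool]
  | succ n ih =>
    intro h
    simp [stageVal, X, g, Fintype.sum_bool, ih]
    ring

def tauQ (k : ℕ) : List Bool → ℝ := fun h => if h.length = k then 1 else 0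

lemma stageVal_tauQ {σ : List Bool → ℝ} (k : ℕ) :
    ∀ n (h : List Bool), h.length ≤ k →
      stageVal σ (tauQ k) n h
        = if n < k - h.length then X σ n h - 1 else X σ (k - h.length) h := by
  intro n
  induction n with
  | zero =>
    intro h hlen
    rcases eq_or_lt_of_le hlen with heq | hlt
    · have h0 : ¬ (0 < k - h.length) := by omega
      have hk0 : k - h.length = 0 := by omega
      rw [if_neg h0, hk0]
      simp [stageVal, tauQ, heq, X, g, Fintype.sum_bool]
    · have h0 : (0 < k - h.length) := by omega
      have hne : h.length ≠ k := by omega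
      rw [if_pos h0]
      simp [stageVal, tauQ, hne, X, g, Fintype.sum_bool]
  | succ n ih =>
    intro h hlen
    rcases eq_or_lt_of_le hlen with heq | hlt
    · have h0 : ¬ (n + 1 < k - h.length) := by omega
      have hk0 : k - h.length = 0 := by omega
      rw [if_neg h0, hk0]
      simp [stageVal, tauQ, heq, X, g, Fintype.sum_bool]
    · have hne : h.length ≠ k := by omega
      have hlt1 : (h ++ [true]).length ≤ k := by simp; omega
      have hlt2 : (h ++ [false]).length ≤ k := by simp; omega
      have e1 := ih (h ++ [true]) hlt1
      have e2 := ih (h ++ [false]) hlt2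
      simp only [List.length_append, List.length_cons, List.length_nil] at e1 e2
      have hll : ∀ (b : Bool), (h ++ [b]).length = h.length + 1 := by simp
      by_cases hc : n + 1 < k - h.length
      · have hc' : n < k - (h.length + 1) := by omega
        rw [if_pos hc]
        rw [if_pos hc'] at e1 e2
        simp [stageVal, tauQ, hne, X, g, Fintype.sum_bool, e1, e2]
        ring
      · have hc' : ¬ (n < k - (h.length + 1)) := by omega
        rw [if_neg hc]
        rw [if_neg hc'] at e1 e2
        have hstep : k - h.length = (k - (h.length + 1)) + 1 := by omega
        rw [hstep]
        simp [stageVal, tauQ, hne, X, g, Fintype.sum_bool, e1, e2]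


set_option maxHeartbeats 1000000 in
lemma main : ∀ lam ∈ Set.Ioo (0:ℝ) (1/100),
    ∀ σ : List Bool → ℝ, ValidStrat σ →
      ∃ τ : List Bool → ℝ, ValidStrat τ ∧
        disc lam σ τ ∉ Set.Icc (-(1 / (2 * Real.exp 1))) (1 / (2 * Real.exp 1)) := by
  intro lam hlam σ hσ
  by_contra hcon
  push_neg at hcon
  obtain ⟨hl0, hl2⟩ := hlam
  have hl1 : lam < 1 := by linarith
  have hlne : lam ≠ 0 := ne_of_gt hl0
  set c : ℝ := 1 / (2 * Real.exp 1) with hc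
  have hcpos : 0 < c := by positivity
  set q : ℝ := 1 - lam with hq
  have hq0 : 0 < q := by simp only [hq]; linarith
  have hq1 : q < 1 := by simp only [hq]; linarith
  have hlam_eq : lam = 1 - q := by rw [hq]; ring
  set u : ℕ → ℝ := fun t => X σ t [] with hu
  have hu0 : ∀ t, 0 ≤ u t := fun t => (X_mem hσ t []).1
  have hu1 : ∀ t, u t ≤ 1 := fun t => (X_mem hσ t []).2
  have hgeo : Summable (fun t : ℕ => lam * q ^ t) :=
    (summable_geometric_of_lt_one hq0.le hq1).mul_left lam
  have hgeo_sum : ∑' t : ℕ, lam * q ^ t = 1 := by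
    rw [tsum_mul_left, tsum_geometric_of_lt_one hq0.le hq1]
    rw [hq]
    field_simp
    rw [sub_sub_cancel, div_self hlne]
  have hbd : ∀ (b : ℕ → ℝ), (∀ t, |b t| ≤ 1) →
      Summable (fun t : ℕ => lam * q ^ t * b t) := by
    intro b hb1
    apply Summable.of_norm_bounded hgeo
    intro t
    rw [Real.norm_eq_abs, abs_mul, abs_mul, abs_of_nonneg hl0.le,
      abs_of_nonneg (pow_nonneg hq0.le t)]
    exact mul_le_of_le_one_right (by positivity) (hb1 t)
  have hSu : Summable (fun t : ℕ => lam * q ^ t * u t) := by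
    apply hbd
    intro t; rw [abs_of_nonneg (hu0 t)]; exact hu1 t
  set S : ℝ := ∑' t : ℕ, lam * q ^ t * u t with hS
  -- never-quitting strategy
  have H0 : 1 - c ≤ S := by
    have hv := hcon (fun _ => 0) (fun h => by norm_num)
    rw [Set.mem_Icc] at hv
    have hd : disc lam σ (fun _ => 0) = S - 1 := by
      unfold disc
      have heq : ∀ t : ℕ, lam * (1 - lam) ^ t * stageVal σ (fun _ => 0) t []
          = lam * q ^ t * u t - lam * q ^ t := by
        intro t; rw [stageVal_tau0, ← hq]; simp only [hu]; ring
      rw [tsum_congr heq, Summable.tsum_sub hSu hgeo, hgeo_sum, hS]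
    rw [hd] at hv
    linarith [hv.1]
  set A : ℕ → ℝ := fun k => ∑ t ∈ Finset.range k, lam * q ^ t * u t with hA
  have hGk : ∀ k, ∑ t ∈ Finset.range k, lam * q ^ t = 1 - q ^ k := by
    intro k
    induction k with
    | zero => simp
    | succ k ih =>
      rw [Finset.sum_range_succ, ih, hlam_eq]
      ring
  -- quit-at-stage-k strategies
  have HK : ∀ k, A k - (1 - q ^ k) + q ^ k * u k ≤ c := by
    intro k
    have hvalid : ValidStrat (tauQ k) := by
      intro h; unfold tauQ; split <;> norm_num
    have hv := hcon (tauQ k) hvalid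
    rw [Set.mem_Icc] at hv
    have hd : disc lam σ (tauQ k) = A k - (1 - q ^ k) + q ^ k * u k := by
      unfold disc
      have heq : ∀ t : ℕ, lam * (1 - lam) ^ t * stageVal σ (tauQ k) t []
          = lam * q ^ t * (if t < k then u t - 1 else u k) := by
        intro t
        rw [stageVal_tauQ k t [] (by simp), ← hq]
        simp only [List.length_nil, Nat.sub_zero, hu]
      rw [tsum_congr heq]
      have hf : Summable (fun t : ℕ => lam * q ^ t * (if t < k then u t - 1 else u k)) := by
        apply hbd
        intro t
        split
        · rw [abs_of_nonpos (by linarith [hu1 t])]; linarith [hu0 t]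
        · rw [abs_of_nonneg (hu0 k)]; exact hu1 k
      rw [← Summable.sum_add_tsum_nat_add k hf]
      have hsum1 : ∑ t ∈ Finset.range k, lam * q ^ t * (if t < k then u t - 1 else u k)
          = A k - (1 - q ^ k) := by
        rw [← hGk k, hA, ← Finset.sum_sub_distrib]
        apply Finset.sum_congr rfl
        intro t ht
        rw [if_pos (Finset.mem_range.1 ht)]
        ring
      have hsum2 : ∑' (t : ℕ), lam * q ^ (t + k) * (if t + k < k then u (t + k) - 1 else u k)
          = q ^ k * u k := by
        have heq2 : ∀ t : ℕ, lam * q ^ (t + k) * (if t + k < k then u (t + k) - 1 else u k)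
            = lam * q ^ t * (q ^ k * u k) := by
          intro t
          rw [if_neg (by omega), pow_add]
          ring
        rw [tsum_congr heq2, tsum_mul_right, hgeo_sum, one_mul]
      rw [hsum1, hsum2]
    rw [hd] at hv
    exact hv.2
  -- tail bound
  have hTail : ∀ k, S ≤ A k + q ^ k := by
    intro k
    have h1 : A k + ∑' t : ℕ, lam * q ^ (t + k) * u (t + k) = S := Summable.sum_add_tsum_nat_add k hSu
    have h2 : ∑' t : ℕ, lam * q ^ (t + k) * u (t + k) ≤ ∑' t : ℕ, lam * q ^ (t + k) := by
      apply Summable.tsum_le_tsum _ ((summable_nat_add_iff (f := fun t => lam * q ^ t * u t) k).2 hSu)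
        ((summable_nat_add_iff (f := fun t => lam * q ^ t) k).2 hgeo)
      intro t
      have hnn : (0:ℝ) ≤ lam * q ^ (t + k) := by positivity
      nlinarith [hu1 (t + k), hu0 (t + k)]
    have h3 : ∑' t : ℕ, lam * q ^ (t + k) = q ^ k := by
      have heq3 : ∀ t : ℕ, lam * q ^ (t + k) = lam * q ^ t * q ^ k := by
        intro t; rw [pow_add]; ring
      rw [tsum_congr heq3, tsum_mul_right, hgeo_sum, one_mul]
    linarith
  -- inductive bound
  have hP : ∀ k, q * A k ≤ (1 + c) * q * (1 - q ^ k) - (k : ℝ) * lam * q ^ k := by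
    intro k
    induction k with
    | zero => simp [hA]
    | succ k ih =>
      have hk := HK k
      have hsucc : A (k + 1) = A k + lam * q ^ k * u k := Finset.sum_range_succ _ _
      have h2 : lam * (q ^ k * u k) ≤ lam * (c + 1 - q ^ k - A k) :=
        mul_le_mul_of_nonneg_left (by linarith) hl0.le
      have h3 : q * A (k + 1) ≤ q * (A k + lam * (c + 1 - q ^ k - A k)) := by
        apply mul_le_mul_of_nonneg_left _ hq0.le
        rw [hsucc, mul_assoc]
        linarith
      have h4 : q * (A k + lam * (c + 1 - q ^ k - A k))
          = q * (q * A k) + lam * q * (c + 1) - lam * q ^ (k + 1) := by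
        rw [hlam_eq]; ring
      have h5 : q * (q * A k) ≤ q * ((1 + c) * q * (1 - q ^ k) - (k : ℝ) * lam * q ^ k) :=
        mul_le_mul_of_nonneg_left ih hq0.le
      have h6 : q * ((1 + c) * q * (1 - q ^ k) - (k : ℝ) * lam * q ^ k) + lam * q * (c + 1)
            - lam * q ^ (k + 1)
          = (1 + c) * q * (1 - q ^ (k + 1)) - ((k : ℝ) + 1) * lam * q ^ (k + 1) := by
        ring
      push_cast
      linarith
  -- choose m = ⌈1/lam⌉ = n + 1
  have hcl : 0 < ⌈(1:ℝ)/lam⌉₊ := Nat.ceil_pos.2 (by positivity)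
  obtain ⟨n, hn⟩ : ∃ n : ℕ, ⌈(1:ℝ)/lam⌉₊ = n + 1 := ⟨⌈(1:ℝ)/lam⌉₊ - 1, by omega⟩
  have hminv : 1/lam ≤ ((n + 1 : ℕ) : ℝ) := hn ▸ Nat.le_ceil _
  have hm1 : 1 ≤ ((n + 1 : ℕ) : ℝ) * lam := (div_le_iff₀ hl0).1 hminv
  have hmlt : ((n + 1 : ℕ) : ℝ) < 1/lam + 1 := hn ▸ Nat.ceil_lt_add_one (by positivity)
  have hm2 : (n : ℝ) * lam < 1 := by
    have hn1 : (n : ℝ) < 1/lam := by push_cast at hmlt; linarith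
    calc (n : ℝ) * lam < (1/lam) * lam := by exact mul_lt_mul_of_pos_right hn1 hl0
    _ = 1 := by field_simp
  -- key inequality derived from the hypotheses
  have hK : ((n + 1 : ℕ) : ℝ) * lam * q ^ (n + 1) + c * q ^ (n + 2) ≤ 2 * c * q := by
    have hPm := hP (n + 1)
    have hT := hTail (n + 1)
    have hqS : q * (1 - c) ≤ q * S := mul_le_mul_of_nonneg_left H0 hq0.le
    have hqT : q * S ≤ q * (A (n + 1) + q ^ (n + 1)) := mul_le_mul_of_nonneg_left hT hq0.le
    have he1 : q * (A (n + 1) + q ^ (n + 1)) = q * A (n + 1) + q ^ (n + 2) := by ring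
    have he2 : (1 + c) * q * (1 - q ^ (n + 1)) - ((n + 1 : ℕ) : ℝ) * lam * q ^ (n + 1)
          + q ^ (n + 2)
        = (q + c * q - q ^ (n + 2) - c * q ^ (n + 2))
          - ((n + 1 : ℕ) : ℝ) * lam * q ^ (n + 1) + q ^ (n + 2) := by
      push_cast; ring
    have hchain : q * (1 - c) ≤ (q + c * q - q ^ (n + 2) - c * q ^ (n + 2))
        - ((n + 1 : ℕ) : ℝ) * lam * q ^ (n + 1) + q ^ (n + 2) := by
      rw [← he2]
      push_cast at hPm ⊢
      linarith
    nlinarith [hchain]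
  -- contradiction via the exponential estimates
  have hQ1pos : 0 < q ^ (n + 1) := pow_pos hq0 _
  have hL : q ^ (n + 1) * (1 + c * q) ≤ 2 * c * q := by
    have h7 : q ^ (n + 1) ≤ ((n + 1 : ℕ) : ℝ) * lam * q ^ (n + 1) := by
      nlinarith [hm1, hQ1pos]
    have hck : c * q ^ (n + 2) = c * q * q ^ (n + 1) := by ring
    have hck2 : q ^ (n + 1) * (1 + c * q) = q ^ (n + 1) + c * q * q ^ (n + 1) := by ring
    linarith [hK, h7]
  -- exp (-(lam/q)) ≤ q
  have hqe : Real.exp (-(lam/q)) ≤ q := by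
    have h1 : lam/q + 1 ≤ Real.exp (lam/q) := Real.add_one_le_exp _
    have h2 : lam/q + 1 = 1/q := by field_simp; rw [hq]; ring
    have h3 : 1/q ≤ Real.exp (lam/q) := h2 ▸ h1
    rw [Real.exp_neg]
    rw [inv_le_comm₀ (Real.exp_pos _) hq0]
    calc q⁻¹ = 1/q := (one_div q).symm
    _ ≤ Real.exp (lam/q) := h3
  have hexp_n : Real.exp (-((n : ℝ) * lam/q)) ≤ q ^ n := by
    have : Real.exp (-(lam/q)) ^ n ≤ q ^ n :=
      pow_le_pow_left₀ (Real.exp_pos _).le hqe n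
    rwa [← Real.exp_nat_mul, show (n : ℝ) * -(lam/q) = -((n : ℝ) * lam/q) by ring] at this
  have hstep : Real.exp (-(lam/q)) ≤ Real.exp 1 * q ^ n := by
    have h3 : Real.exp 1 * Real.exp (-((n : ℝ) * lam/q)) ≤ Real.exp 1 * q ^ n :=
      mul_le_mul_of_nonneg_left hexp_n (Real.exp_pos 1).le
    rw [← Real.exp_add] at h3
    refine le_trans (Real.exp_le_exp.2 ?_) h3
    have hdiv : ((n : ℝ) * lam - lam) / q ≤ 1 := by
      rw [div_le_one hq0, hq]
      linarith
    have hsplit : ((n : ℝ) * lam - lam) / q = (n : ℝ) * lam / q - lam / q := by ring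
    rw [hsplit] at hdiv
    linarith
  have hnum : Real.exp (lam/q) < 1 + c * q := by
    have hx : lam/q < 1/99 := by
      rw [div_lt_iff₀ hq0]
      rw [hq]
      nlinarith
    have hxpos : 0 < 1 - lam/q := by
      have h1 : (0:ℝ) ≤ lam/q := by positivity
      nlinarith
    have hub : Real.exp (lam/q) ≤ (1 - lam/q)⁻¹ := by
      have h1 : 1 - lam/q ≤ (Real.exp (lam/q))⁻¹ := by
        have h0 := Real.add_one_le_exp (-(lam/q))
        rw [Real.exp_neg] at h0
        linarith
      have h2 : Real.exp (lam/q) * (1 - lam/q) ≤ 1 := by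
        have h3 := mul_le_mul_of_nonneg_left h1 (Real.exp_pos (lam/q)).le
        rwa [mul_inv_cancel₀ (ne_of_gt (Real.exp_pos _))] at h3
      rw [inv_eq_one_div, le_div_iff₀ hxpos]
      exact h2
    have hub2 : (1 - lam/q)⁻¹ ≤ (98/99 : ℝ)⁻¹ :=
      inv_anti₀ (by norm_num) (by linarith)
    have hclb : (1/6 : ℝ) < c := by
      have he3 : Real.exp 1 < 3 := lt_trans Real.exp_one_lt_d9 (by norm_num)
      rw [hc, div_lt_div_iff₀ (by norm_num) (by positivity)]
      nlinarith
    have hq99 : (99/100 : ℝ) < q := by rw [hq]; linarith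
    have hcq : (1/6 : ℝ) * (99/100) < c * q := by nlinarith
    calc Real.exp (lam/q) ≤ (1 - lam/q)⁻¹ := hub
    _ ≤ (98/99 : ℝ)⁻¹ := hub2
    _ = 99/98 := by norm_num
    _ < 1 + (1/6 : ℝ) * (99/100) := by norm_num
    _ < 1 + c * q := by linarith
  have h2c : 2 * c = (Real.exp 1)⁻¹ := by
    rw [hc]; field_simp
  have hone : 1 < Real.exp (-(lam/q)) * (1 + c * q) := by
    have h3 := mul_lt_mul_of_pos_left hnum (inv_pos.2 (Real.exp_pos (lam/q)))
    rw [inv_mul_cancel₀ (ne_of_gt (Real.exp_pos _)), ← Real.exp_neg] at h3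
    exact h3
  have htwo : 1 < Real.exp 1 * q ^ n * (1 + c * q) := by
    have h4 := mul_le_mul_of_nonneg_right hstep (by positivity : (0:ℝ) ≤ 1 + c * q)
    calc (1:ℝ) < Real.exp (-(lam/q)) * (1 + c * q) := hone
    _ ≤ Real.exp 1 * q ^ n * (1 + c * q) := h4
  have hthree : 2 * c < q ^ n * (1 + c * q) := by
    rw [h2c, inv_eq_one_div, div_lt_iff₀ (Real.exp_pos 1)]
    nlinarith [htwo]
  have hfinal : 2 * c * q < q ^ (n + 1) * (1 + c * q) := by
    calc 2 * c * q = q * (2 * c) := by ring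
    _ < q * (q ^ n * (1 + c * q)) := mul_lt_mul_of_pos_left hthree hq0
    _ = q ^ (n + 1) * (1 + c * q) := by ring
  linarith

/-- there is `λ* ∈ (0,1)` such that for every `λ ∈ (0,λ*)` and every
strategy `σ` of player 1 there is a strategy `τ` of player 2 with
`ḡ^λ_∞(σ,τ) ∉ [−1/(2e), 1/(2e)]`; consequently `{0}` is not weakly approachable by
player 1 for the discounted evaluations. -/
theorem not_weakly_approachable_discounted :
    (∃ lamStar ∈ Set.Ioo (0:ℝ) 1, ∀ lam ∈ Set.Ioo (0:ℝ) lamStar,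
      ∀ σ : List Bool → ℝ, ValidStrat σ →
        ∃ τ : List Bool → ℝ, ValidStrat τ ∧
          disc lam σ τ ∉ Set.Icc (-(1 / (2 * Real.exp 1))) (1 / (2 * Real.exp 1))) ∧
    ¬ (∀ ε > (0:ℝ), ∃ lam₀ ∈ Set.Ioo (0:ℝ) 1, ∀ lam ∈ Set.Ioo (0:ℝ) lam₀,
        ∃ σ : List Bool → ℝ, ValidStrat σ ∧ ∀ τ : List Bool → ℝ, ValidStrat τ →
          |disc lam σ τ| ≤ ε) := by
  constructor
  · exact ⟨1/100, ⟨by norm_num, by norm_num⟩, main⟩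
  · intro hcontra
    obtain ⟨lam₀, hlam₀, h2⟩ := hcontra (1 / (2 * Real.exp 1)) (by positivity)
    set lam : ℝ := min lam₀ (1/100) / 2 with hlamdef
    have hmin : 0 < min lam₀ (1/100 : ℝ) := lt_min hlam₀.1 (by norm_num)
    have hl0 : 0 < lam := by rw [hlamdef]; positivity
    have hlt₀ : lam < lam₀ := by
      have h := min_le_left lam₀ (1/100 : ℝ)
      rw [hlamdef]
      linarith [hlam₀.1]
    have hlt1 : lam < 1/100 := by
      have h := min_le_right lam₀ (1/100 : ℝ)
      rw [hlamdef]
      linarith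
    obtain ⟨σ, hσ, hall⟩ := h2 lam ⟨hl0, hlt₀⟩
    obtain ⟨τ, hτ, hout⟩ := main lam ⟨hl0, hlt1⟩ σ hσ
    apply hout
    rw [Set.mem_Icc]
    have h3 := hall τ hτ
    rwa [abs_le] at h3

end BigMatchIIExample

end
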